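/- Define a_p⁰(z,w) = (ln|ln|z|²|)^p |w|² on {(z,w) ∈ ℂ² : 0 < |z| < 1/2}. Then i ∂∂̄ a_p⁰ equals (up to cross terms) -i p (ln|ln|z|²|)^{p-1} |w|² dz dz̄/|z ln|z|²|² + i (ln|ln|z|²|)^p dw dw̄, and for suitable p ≥ 1 the sum i∂∂̄(a_p(z,w) + a_p⁰(z,v)) is positive in a neighborhood of the origin in ℂ³ off the coordinate hyperplanes {z=0} ∪ {w=0}. -/

import Mathlib

set_option maxHeartbeats 1000000

open Filter Topology Complex

/-- The function `a_p(z,w) = -(ln|ln|z|²|)^p (ln|ln|w|²|)^p`. -/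
noncomputable def apFun (p : ℕ) (z w : ℂ) : ℝ :=
  -((Real.log |Real.log (‖z‖ ^ 2)|) ^ p * (Real.log |Real.log (‖w‖ ^ 2)|) ^ p)

/-- The function `a_p⁰(z,w) = (ln|ln|z|²|)^p |w|²`. -/
noncomputable def ap0Fun (p : ℕ) (z w : ℂ) : ℝ :=
  (Real.log |Real.log (‖z‖ ^ 2)|) ^ p * ‖w‖ ^ 2

/-- The Levi form of `f : ℂ³ → ℝ` at `x` in direction `v`. -/
noncomputable def leviForm3 (f : ℂ × ℂ × ℂ → ℝ) (x v : ℂ × ℂ × ℂ) : ℝ :=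
  iteratedFDeriv ℝ 2 f x ![v, v] +
    iteratedFDeriv ℝ 2 f x ![Complex.I • v, Complex.I • v]

/-! ### Auxiliary lemmas -/

/-- Second derivative along a line, expressed via `fderiv (fderiv f)`. -/
lemma bridge {E : Type*} [NormedAddCommGroup E] [NormedSpace ℝ E] {f : E → ℝ} {S : Set E}
    (hS : IsOpen S) {x : E} (hx : x ∈ S) (hf : ContDiffOn ℝ 2 f S) (u : E) :
    fderiv ℝ (fderiv ℝ f) x u u = deriv (deriv (fun t : ℝ => f (x + t • u))) 0 := by
  set g := fderiv ℝ f with hg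
  have hline : ∀ t : ℝ, HasDerivAt (fun s : ℝ => x + s • u) u t := by
    intro t
    simpa using ((hasDerivAt_id t).smul_const u).const_add x
  have hgS : ContDiffOn ℝ 1 g S := hf.fderiv_of_isOpen hS (by norm_num)
  have hdf : ∀ y ∈ S, HasFDerivAt f (g y) y := by
    intro y hy
    exact ((hf.differentiableOn (by norm_num)).differentiableAt (hS.mem_nhds hy)).hasFDerivAt
  have hφ' : ∀ t : ℝ, x + t • u ∈ S →
      HasDerivAt (fun s : ℝ => f (x + s • u)) (g (x + t • u) u) t := by
    intro t ht
    exact (hdf _ ht).comp_hasDerivAt t (hline t)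
  have hT : {t : ℝ | x + t • u ∈ S} ∈ 𝓝 (0 : ℝ) := by
    have : Continuous fun t : ℝ => x + t • u := by continuity
    have hopen : IsOpen {t : ℝ | x + t • u ∈ S} := hS.preimage this
    exact hopen.mem_nhds (by simpa using hx)
  have hev : deriv (fun s : ℝ => f (x + s • u)) =ᶠ[𝓝 (0:ℝ)] fun t => g (x + t • u) u := by
    filter_upwards [hT] with t ht
    exact (hφ' t ht).deriv
  rw [hev.deriv_eq]
  have hgx : DifferentiableAt ℝ g x :=
    (hgS.differentiableOn (by norm_num)).differentiableAt (hS.mem_nhds hx)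
  have h2 : HasDerivAt (fun t : ℝ => g (x + t • u)) (fderiv ℝ g x u) 0 := by
    have hx0 : HasFDerivAt g (fderiv ℝ g x) (x + (0:ℝ) • u) := by
      simpa using hgx.hasFDerivAt
    exact hx0.comp_hasDerivAt 0 (hline 0)
  have h3 : HasDerivAt (fun t : ℝ => g (x + t • u) u) (fderiv ℝ g x u u) 0 := by
    have := h2.clm_apply (hasDerivAt_const (0:ℝ) u)
    simpa using this
  rw [h3.deriv]

noncomputable def dval (A B C : ℝ) : ℝ :=
  (2 * C * (A * Real.log A) - B * (B * Real.log A + B)) / (A * Real.log A) ^ 2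

lemma hasDerivAt_quad (A B C t : ℝ) :
    HasDerivAt (fun t : ℝ => A + B * t + C * t ^ 2) (B + 2 * C * t) t := by
  have h1 : HasDerivAt (fun t : ℝ => A + B * t + C * t ^ 2)
      (0 + B * 1 + C * (2 * t ^ 1)) t :=
    ((hasDerivAt_const t A).add ((hasDerivAt_id t).const_mul B)).add
      ((hasDerivAt_pow 2 t).const_mul C)
  have h2 : B + 2 * C * t = 0 + B * 1 + C * (2 * t ^ 1) := by ring
  rw [h2]; exact h1

lemma hasDerivAt_LL (A B C : ℝ) {t : ℝ} (h0 : 0 < A + B * t + C * t ^ 2)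
    (h1 : A + B * t + C * t ^ 2 < 1) :
    HasDerivAt (fun t : ℝ => Real.log (-Real.log (A + B * t + C * t ^ 2)))
      ((B + 2 * C * t) / ((A + B * t + C * t ^ 2) * Real.log (A + B * t + C * t ^ 2))) t := by
  have hq := hasDerivAt_quad A B C t
  have hlog : HasDerivAt (fun t : ℝ => Real.log (A + B * t + C * t ^ 2))
      ((B + 2 * C * t) / (A + B * t + C * t ^ 2)) t := hq.log h0.ne'
  have hll := hlog.neg.log (by
    have := Real.log_neg h0 h1
    exact neg_ne_zero.mpr this.ne)
  convert hll using 1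
  · rfl
  simp only [Pi.neg_apply]
  have hA : (A + B * t + C * t ^ 2) ≠ 0 := h0.ne'
  have hL : Real.log (A + B * t + C * t ^ 2) ≠ 0 := (Real.log_neg h0 h1).ne
  field_simp

lemma hasDerivAt_D (A B C : ℝ) (h0 : 0 < A) (h1 : A < 1) :
    HasDerivAt (fun t : ℝ =>
        (B + 2 * C * t) / ((A + B * t + C * t ^ 2) * Real.log (A + B * t + C * t ^ 2)))
      (dval A B C) 0 := by
  have hA : (A : ℝ) ≠ 0 := h0.ne'
  have hL : Real.log A ≠ 0 := (Real.log_neg h0 h1).ne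
  have hnum : HasDerivAt (fun t : ℝ => B + 2 * C * t) (2 * C) 0 := by
    simpa using ((hasDerivAt_id (0:ℝ)).const_mul (2*C)).const_add B
  have hP : HasDerivAt (fun t : ℝ => A + B * t + C * t ^ 2) B 0 := by
    simpa using hasDerivAt_quad A B C 0
  have hlogP : HasDerivAt (fun t : ℝ => Real.log (A + B * t + C * t ^ 2)) (B / A) 0 := by
    have h := (hasDerivAt_quad A B C 0).log (by simpa using hA)
    simpa using h
  have hden : HasDerivAt
      (fun t : ℝ => (A + B * t + C * t ^ 2) * Real.log (A + B * t + C * t ^ 2))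
      (B * Real.log A + A * (B / A)) 0 := by
    have h := hP.mul hlogP
    exact h.congr_deriv (by simp)
  have hden0 : (fun t : ℝ => (A + B * t + C * t ^ 2) * Real.log (A + B * t + C * t ^ 2)) 0 ≠ 0 := by
    simpa using mul_ne_zero hA hL
  have h := hnum.div hden hden0
  refine h.congr_deriv ?_
  unfold dval
  norm_num
  field_simp

lemma second_deriv_line (A₁ B₁ C₁ A₂ B₂ C₂ A₃ B₃ C₃ : ℝ)
    (h10 : 0 < A₁) (h11 : A₁ < 1) (h20 : 0 < A₂) (h21 : A₂ < 1) :
    deriv (deriv (fun t : ℝ =>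
      Real.log (-Real.log (A₁ + B₁ * t + C₁ * t ^ 2)) *
        ((A₃ + B₃ * t + C₃ * t ^ 2) - Real.log (-Real.log (A₂ + B₂ * t + C₂ * t ^ 2))))) 0
    = dval A₁ B₁ C₁ * (A₃ - Real.log (-Real.log A₂))
      + 2 * (B₁ / (A₁ * Real.log A₁)) * (B₃ - B₂ / (A₂ * Real.log A₂))
      + Real.log (-Real.log A₁) * (2 * C₃ - dval A₂ B₂ C₂) := by
  set ψ : ℝ → ℝ := fun t =>
    (B₁ + 2 * C₁ * t) / ((A₁ + B₁ * t + C₁ * t ^ 2) * Real.log (A₁ + B₁ * t + C₁ * t ^ 2)) *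
      ((A₃ + B₃ * t + C₃ * t ^ 2) - Real.log (-Real.log (A₂ + B₂ * t + C₂ * t ^ 2)))
    + Real.log (-Real.log (A₁ + B₁ * t + C₁ * t ^ 2)) *
      ((B₃ + 2 * C₃ * t) -
        (B₂ + 2 * C₂ * t) / ((A₂ + B₂ * t + C₂ * t ^ 2) * Real.log (A₂ + B₂ * t + C₂ * t ^ 2)))
    with hψdef
  have hT : {t : ℝ | (0 < A₁ + B₁ * t + C₁ * t ^ 2 ∧ A₁ + B₁ * t + C₁ * t ^ 2 < 1) ∧
      (0 < A₂ + B₂ * t + C₂ * t ^ 2 ∧ A₂ + B₂ * t + C₂ * t ^ 2 < 1)} ∈ 𝓝 (0:ℝ) := by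
    have hc1 : Continuous fun t : ℝ => A₁ + B₁ * t + C₁ * t ^ 2 := by continuity
    have hc2 : Continuous fun t : ℝ => A₂ + B₂ * t + C₂ * t ^ 2 := by continuity
    have hopen : IsOpen {t : ℝ | (0 < A₁ + B₁ * t + C₁ * t ^ 2 ∧ A₁ + B₁ * t + C₁ * t ^ 2 < 1) ∧
        (0 < A₂ + B₂ * t + C₂ * t ^ 2 ∧ A₂ + B₂ * t + C₂ * t ^ 2 < 1)} :=
      (((isOpen_lt continuous_const hc1).inter (isOpen_lt hc1 continuous_const)).inter
        ((isOpen_lt continuous_const hc2).inter (isOpen_lt hc2 continuous_const)))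
    refine hopen.mem_nhds ?_
    constructor <;> constructor <;> norm_num [h10, h11, h20, h21]
  have hev : deriv (fun t : ℝ =>
      Real.log (-Real.log (A₁ + B₁ * t + C₁ * t ^ 2)) *
        ((A₃ + B₃ * t + C₃ * t ^ 2) - Real.log (-Real.log (A₂ + B₂ * t + C₂ * t ^ 2))))
      =ᶠ[𝓝 (0:ℝ)] ψ := by
    filter_upwards [hT] with t ht
    have h := (hasDerivAt_LL A₁ B₁ C₁ ht.1.1 ht.1.2).mul
      ((hasDerivAt_quad A₃ B₃ C₃ t).sub (hasDerivAt_LL A₂ B₂ C₂ ht.2.1 ht.2.2))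
    exact h.deriv
  rw [hev.deriv_eq]
  have hD₁ := hasDerivAt_D A₁ B₁ C₁ h10 h11
  have hD₂ := hasDerivAt_D A₂ B₂ C₂ h20 h21
  have hL₁ : HasDerivAt (fun t : ℝ => Real.log (-Real.log (A₁ + B₁ * t + C₁ * t ^ 2)))
      (B₁ / (A₁ * Real.log A₁)) 0 := by
    have h := hasDerivAt_LL A₁ B₁ C₁ (t := 0) (by norm_num [h10]) (by norm_num [h11])
    convert h using 1
    norm_num
  have hL₂ : HasDerivAt (fun t : ℝ => Real.log (-Real.log (A₂ + B₂ * t + C₂ * t ^ 2)))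
      (B₂ / (A₂ * Real.log A₂)) 0 := by
    have h := hasDerivAt_LL A₂ B₂ C₂ (t := 0) (by norm_num [h20]) (by norm_num [h21])
    convert h using 1
    norm_num
  have hP₃ : HasDerivAt (fun t : ℝ => A₃ + B₃ * t + C₃ * t ^ 2) B₃ 0 := by
    simpa using hasDerivAt_quad A₃ B₃ C₃ 0
  have hP₃' : HasDerivAt (fun t : ℝ => B₃ + 2 * C₃ * t) (2 * C₃) 0 := by
    simpa using ((hasDerivAt_id (0:ℝ)).const_mul (2*C₃)).const_add B₃
  have h := (hD₁.mul (hP₃.sub hL₂)).add (hL₁.mul (hP₃'.sub hD₂))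
  rw [show deriv ψ 0 = _ from h.deriv]
  norm_num
  ring

lemma amgm {X p q : ℝ} (hp : 0 ≤ p) (hq : 0 ≤ q) (hX : X ^ 2 ≤ p * q) : 2 * X ≤ p + q := by
  nlinarith [sq_nonneg (p - q), sq_nonneg (p + q), hX, mul_nonneg hp hq]

lemma dval_sum (A C r i g : ℝ) (hA : A ≠ 0) (hg : g ≠ 0) (h : r ^ 2 + i ^ 2 = A * C) :
    (2 * C * (A * g) - 2 * r * (2 * r * g + 2 * r)) / (A * g) ^ 2
      + (2 * C * (A * g) - 2 * i * (2 * i * g + 2 * i)) / (A * g) ^ 2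
      = -(4 * C) / (A * g ^ 2) := by
  rw [← add_div]
  have hn : (2 * C * (A * g) - 2 * r * (2 * r * g + 2 * r))
      + (2 * C * (A * g) - 2 * i * (2 * i * g + 2 * i)) = -(4 * A * C) := by
    linear_combination (-4 * (g + 1)) * h
  rw [hn]
  field_simp

lemma key_alg (A₁ C₁ A₂ C₂ A₃ C₃ r₁ i₁ r₂ i₂ r₃ i₃ g₁ g₂ M₁ M₂ : ℝ)
    (hA₁ : 0 < A₁) (hA₂ : 0 < A₂) (hC₁ : 0 ≤ C₁) (hC₂ : 0 ≤ C₂) (hC₃ : 0 ≤ C₃)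
    (hA₃ : 0 ≤ A₃) (hA₃1 : A₃ ≤ 1)
    (hg₁ : g₁ < 0) (hg₂ : g₂ < 0) (hM₁ : 3 ≤ M₁) (hM₂ : 3 ≤ M₂)
    (h1 : r₁ ^ 2 + i₁ ^ 2 = A₁ * C₁) (h2 : r₂ ^ 2 + i₂ ^ 2 = A₂ * C₂)
    (h3 : r₃ ^ 2 + i₃ ^ 2 = A₃ * C₃) :
    0 ≤ ((2 * C₁ * (A₁ * g₁) - 2 * r₁ * (2 * r₁ * g₁ + 2 * r₁)) / (A₁ * g₁) ^ 2 * (A₃ - M₂)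
          + 2 * (2 * r₁ / (A₁ * g₁)) * (2 * r₃ - 2 * r₂ / (A₂ * g₂))
          + M₁ * (2 * C₃ - (2 * C₂ * (A₂ * g₂) - 2 * r₂ * (2 * r₂ * g₂ + 2 * r₂)) / (A₂ * g₂) ^ 2))
        + ((2 * C₁ * (A₁ * g₁) - 2 * i₁ * (2 * i₁ * g₁ + 2 * i₁)) / (A₁ * g₁) ^ 2 * (A₃ - M₂)
          + 2 * (2 * i₁ / (A₁ * g₁)) * (2 * i₃ - 2 * i₂ / (A₂ * g₂))
          + M₁ * (2 * C₃ - (2 * C₂ * (A₂ * g₂) - 2 * i₂ * (2 * i₂ * g₂ + 2 * i₂)) / (A₂ * g₂) ^ 2)) := by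
  have hA₁' : A₁ ≠ 0 := hA₁.ne'
  have hA₂' : A₂ ≠ 0 := hA₂.ne'
  have hg₁' : g₁ ≠ 0 := hg₁.ne
  have hg₂' : g₂ ≠ 0 := hg₂.ne
  set P₁₃ := r₁ * r₃ + i₁ * i₃ with hP13
  set P₁₂ := r₁ * r₂ + i₁ * i₂ with hP12
  have e₁ := dval_sum A₁ C₁ r₁ i₁ g₁ hA₁' hg₁' h1
  have e₂ := dval_sum A₂ C₂ r₂ i₂ g₂ hA₂' hg₂' h2
  have hstep : ((2 * C₁ * (A₁ * g₁) - 2 * r₁ * (2 * r₁ * g₁ + 2 * r₁)) / (A₁ * g₁) ^ 2 * (A₃ - M₂)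
          + 2 * (2 * r₁ / (A₁ * g₁)) * (2 * r₃ - 2 * r₂ / (A₂ * g₂))
          + M₁ * (2 * C₃ - (2 * C₂ * (A₂ * g₂) - 2 * r₂ * (2 * r₂ * g₂ + 2 * r₂)) / (A₂ * g₂) ^ 2))
        + ((2 * C₁ * (A₁ * g₁) - 2 * i₁ * (2 * i₁ * g₁ + 2 * i₁)) / (A₁ * g₁) ^ 2 * (A₃ - M₂)
          + 2 * (2 * i₁ / (A₁ * g₁)) * (2 * i₃ - 2 * i₂ / (A₂ * g₂))
          + M₁ * (2 * C₃ - (2 * C₂ * (A₂ * g₂) - 2 * i₂ * (2 * i₂ * g₂ + 2 * i₂)) / (A₂ * g₂) ^ 2))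
      = (-(4 * C₁) / (A₁ * g₁ ^ 2)) * (A₃ - M₂) + 8 * P₁₃ / (A₁ * g₁)
        - 8 * P₁₂ / ((A₁ * g₁) * (A₂ * g₂))
        + M₁ * (4 * C₃ + 4 * C₂ / (A₂ * g₂ ^ 2)) := by
    linear_combination (A₃ - M₂) * e₁ - M₁ * e₂
  rw [hstep]
  have cs13 : P₁₃ ^ 2 ≤ (A₁ * C₁) * (A₃ * C₃) := by
    rw [← h1, ← h3, hP13]; nlinarith [sq_nonneg (r₁ * i₃ - i₁ * r₃)]
  have cs12 : P₁₂ ^ 2 ≤ (A₁ * C₁) * (A₂ * C₂) := by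
    rw [← h1, ← h2, hP12]; nlinarith [sq_nonneg (r₁ * i₂ - i₁ * r₂)]
  obtain ⟨τ₁, hτ₁⟩ : ∃ τ : ℝ, τ = -g₁ := ⟨_, rfl⟩
  obtain ⟨τ₂, hτ₂⟩ : ∃ τ : ℝ, τ = -g₂ := ⟨_, rfl⟩
  have hτ₁0 : 0 < τ₁ := by rw [hτ₁]; linarith
  have hτ₂0 : 0 < τ₂ := by rw [hτ₂]; linarith
  have hd : 0 < (A₁ * τ₁ ^ 2) * (A₂ * τ₂ ^ 2) := by positivity
  have hEq : -(4 * C₁) / (A₁ * g₁ ^ 2) * (A₃ - M₂) + 8 * P₁₃ / (A₁ * g₁)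
        - 8 * P₁₂ / (A₁ * g₁ * (A₂ * g₂))
        + M₁ * (4 * C₃ + 4 * C₂ / (A₂ * g₂ ^ 2))
      = (4 * C₁ * (M₂ - A₃) * (A₂ * τ₂ ^ 2) - 8 * P₁₃ * τ₁ * (A₂ * τ₂ ^ 2)
          - 8 * P₁₂ * τ₁ * τ₂ + 4 * M₁ * C₃ * (A₁ * τ₁ ^ 2) * (A₂ * τ₂ ^ 2)
          + 4 * M₁ * C₂ * (A₁ * τ₁ ^ 2)) / ((A₁ * τ₁ ^ 2) * (A₂ * τ₂ ^ 2)) := by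
    rw [hτ₁, hτ₂]
    field_simp
    ring
  rw [hEq]
  apply div_nonneg _ hd.le
  have b1 : 2 * (4 * P₁₃ * τ₁) ≤ 4 * C₁ * A₃ + 4 * C₃ * (A₁ * τ₁ ^ 2) := by
    refine amgm (by positivity) (by positivity) ?_
    have h : (4 * P₁₃ * τ₁) ^ 2 = 16 * P₁₃ ^ 2 * τ₁ ^ 2 := by ring
    rw [h]
    nlinarith [cs13, sq_nonneg τ₁]
  have b2 : 2 * (4 * P₁₂ * τ₁ * τ₂) ≤ 4 * C₁ * (A₂ * τ₂ ^ 2) + 4 * C₂ * (A₁ * τ₁ ^ 2) := by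
    refine amgm (by positivity) (by positivity) ?_
    have h : (4 * P₁₂ * τ₁ * τ₂) ^ 2 = 16 * P₁₂ ^ 2 * (τ₁ ^ 2 * τ₂ ^ 2) := by ring
    rw [h]
    nlinarith [cs12, sq_nonneg (τ₁ * τ₂), sq_nonneg τ₁, sq_nonneg τ₂,
      mul_nonneg (sq_nonneg τ₁) (sq_nonneg τ₂)]
  have hA2τ : (0:ℝ) ≤ A₂ * τ₂ ^ 2 := by positivity
  have hb1' := mul_le_mul_of_nonneg_right b1 hA2τ
  have key1 : 0 ≤ 4 * C₁ * (A₂ * τ₂ ^ 2) * (M₂ - 2 * A₃ - 1) := by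
    have h : 0 ≤ M₂ - 2 * A₃ - 1 := by linarith
    positivity
  have key2 : 0 ≤ 4 * C₃ * (A₁ * τ₁ ^ 2) * (A₂ * τ₂ ^ 2) * (M₁ - 1) := by
    have h : 0 ≤ M₁ - 1 := by linarith
    positivity
  have key3 : 0 ≤ 4 * C₂ * (A₁ * τ₁ ^ 2) * (M₁ - 1) := by
    have h : 0 ≤ M₁ - 1 := by linarith
    positivity
  linarith [hb1', b2, key1, key2, key3]

/-! ### The clean version of the function and its smoothness -/

noncomputable def fClean : ℂ × ℂ × ℂ → ℝ := fun y =>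
  Real.log (-Real.log (Complex.normSq y.1)) *
    (Complex.normSq y.2.2 - Real.log (-Real.log (Complex.normSq y.2.1)))

def Sdom : Set (ℂ × ℂ × ℂ) :=
  {y | (0 < Complex.normSq y.1 ∧ Complex.normSq y.1 < 1) ∧
       (0 < Complex.normSq y.2.1 ∧ Complex.normSq y.2.1 < 1)}

lemma Sdom_open : IsOpen Sdom := by
  have h1 : Continuous fun y : ℂ × ℂ × ℂ => Complex.normSq y.1 :=
    Complex.continuous_normSq.comp continuous_fst
  have h2 : Continuous fun y : ℂ × ℂ × ℂ => Complex.normSq y.2.1 :=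
    Complex.continuous_normSq.comp (continuous_fst.comp continuous_snd)
  exact (((isOpen_lt continuous_const h1).inter (isOpen_lt h1 continuous_const)).inter
    ((isOpen_lt continuous_const h2).inter (isOpen_lt h2 continuous_const)))

lemma contDiff_normSq : ContDiff ℝ 2 Complex.normSq := by
  have h : (Complex.normSq : ℂ → ℝ) = fun z => z.re * z.re + z.im * z.im := by
    funext z; exact Complex.normSq_apply z
  rw [h]
  exact (Complex.reCLM.contDiff.mul Complex.reCLM.contDiff).add
    (Complex.imCLM.contDiff.mul Complex.imCLM.contDiff)

lemma contDiffOn_fClean : ContDiffOn ℝ 2 fClean Sdom := by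
  intro y hy
  obtain ⟨⟨h10, h11⟩, h20, h21⟩ := hy
  apply ContDiffAt.contDiffWithinAt
  have c1 : ContDiffAt ℝ 2 (fun y : ℂ × ℂ × ℂ => Complex.normSq y.1) y :=
    (contDiff_normSq.comp contDiff_fst).contDiffAt
  have c2 : ContDiffAt ℝ 2 (fun y : ℂ × ℂ × ℂ => Complex.normSq y.2.1) y :=
    (contDiff_normSq.comp (contDiff_fst.comp contDiff_snd)).contDiffAt
  have c3 : ContDiffAt ℝ 2 (fun y : ℂ × ℂ × ℂ => Complex.normSq y.2.2) y :=
    (contDiff_normSq.comp (contDiff_snd.comp contDiff_snd)).contDiffAt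
  have l1 : ContDiffAt ℝ 2 (fun y : ℂ × ℂ × ℂ => Real.log (-Real.log (Complex.normSq y.1))) y := by
    have hlog : ContDiffAt ℝ 2 (fun y : ℂ × ℂ × ℂ => Real.log (Complex.normSq y.1)) y :=
      ContDiffAt.comp (g := Real.log) y (Real.contDiffAt_log.2 h10.ne') c1
    exact (Real.contDiffAt_log.2 (neg_ne_zero.2 (Real.log_neg h10 h11).ne)).comp y hlog.neg
  have l2 : ContDiffAt ℝ 2 (fun y : ℂ × ℂ × ℂ => Real.log (-Real.log (Complex.normSq y.2.1))) y := by
    have hlog : ContDiffAt ℝ 2 (fun y : ℂ × ℂ × ℂ => Real.log (Complex.normSq y.2.1)) y :=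
      ContDiffAt.comp (g := Real.log) y (Real.contDiffAt_log.2 h20.ne') c2
    exact (Real.contDiffAt_log.2 (neg_ne_zero.2 (Real.log_neg h20 h21).ne)).comp y hlog.neg
  exact l1.mul (c3.sub l2)

lemma normSq_line (z a : ℂ) (t : ℝ) :
    Complex.normSq (z + t • a) =
      Complex.normSq z + 2 * (z * (starRingEnd ℂ) a).re * t + Complex.normSq a * t ^ 2 := by
  rw [Complex.real_smul, Complex.normSq_add, Complex.normSq_mul, Complex.normSq_ofReal,
    map_mul, Complex.conj_ofReal]
  simp [Complex.mul_re, Complex.ofReal_re, Complex.ofReal_im]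
  ring

lemma re_sq_add_im_sq (z a : ℂ) :
    (z * (starRingEnd ℂ) a).re ^ 2 + (z * (starRingEnd ℂ) a).im ^ 2
      = Complex.normSq z * Complex.normSq a := by
  have h : (z * (starRingEnd ℂ) a).re ^ 2 + (z * (starRingEnd ℂ) a).im ^ 2
      = Complex.normSq (z * (starRingEnd ℂ) a) := by
    rw [Complex.normSq_apply]; ring
  rw [h, Complex.normSq_mul, Complex.normSq_conj]

lemma re_mul_I (z a : ℂ) :
    (z * (starRingEnd ℂ) (Complex.I * a)).re = (z * (starRingEnd ℂ) a).im := by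
  simp [map_mul, Complex.conj_I, Complex.mul_re, Complex.mul_im]
  ring

lemma normSq_I_mul (a : ℂ) : Complex.normSq (Complex.I * a) = Complex.normSq a := by
  simp [Complex.normSq_mul]

lemma piece (z w v₀ a b c : ℂ)
    (h10 : 0 < Complex.normSq z) (h11 : Complex.normSq z < 1)
    (h20 : 0 < Complex.normSq w) (h21 : Complex.normSq w < 1) :
    fderiv ℝ (fderiv ℝ fClean) (z, w, v₀) (a, b, c) (a, b, c)
      = dval (Complex.normSq z) (2 * (z * (starRingEnd ℂ) a).re) (Complex.normSq a)
          * (Complex.normSq v₀ - Real.log (-Real.log (Complex.normSq w)))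
        + 2 * (2 * (z * (starRingEnd ℂ) a).re / (Complex.normSq z * Real.log (Complex.normSq z)))
          * (2 * (v₀ * (starRingEnd ℂ) c).re
              - 2 * (w * (starRingEnd ℂ) b).re / (Complex.normSq w * Real.log (Complex.normSq w)))
        + Real.log (-Real.log (Complex.normSq z))
          * (2 * Complex.normSq c
              - dval (Complex.normSq w) (2 * (w * (starRingEnd ℂ) b).re) (Complex.normSq b)) := by
  have hmem : (z, w, v₀) ∈ Sdom := ⟨⟨h10, h11⟩, h20, h21⟩
  rw [bridge Sdom_open hmem contDiffOn_fClean (a, b, c)]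
  have hfun : (fun t : ℝ => fClean ((z, w, v₀) + t • (a, b, c)))
      = fun t : ℝ => Real.log (-Real.log (Complex.normSq z
            + 2 * (z * (starRingEnd ℂ) a).re * t + Complex.normSq a * t ^ 2)) *
          ((Complex.normSq v₀ + 2 * (v₀ * (starRingEnd ℂ) c).re * t + Complex.normSq c * t ^ 2)
            - Real.log (-Real.log (Complex.normSq w
                + 2 * (w * (starRingEnd ℂ) b).re * t + Complex.normSq b * t ^ 2))) := by
    funext t
    show fClean (z + t • a, w + t • b, v₀ + t • c) = _
    simp only [fClean]
    rw [normSq_line, normSq_line, normSq_line]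
  rw [hfun]
  exact second_deriv_line _ _ _ _ _ _ _ _ _ h10 h11 h20 h21

/-- For suitable `p ≥ 1`, the form `i∂∂̄(a_p(z,w) + a_p⁰(z,v))` is positive in a
neighborhood of the origin in `ℂ³`, off the coordinate hyperplanes `{z=0} ∪ {w=0}`. -/
theorem stmt9 :
    ∃ p : ℕ, 1 ≤ p ∧ ∃ ε > 0, ∀ x : ℂ × ℂ × ℂ,
      0 < ‖x.1‖ → ‖x.1‖ < ε → 0 < ‖x.2.1‖ → ‖x.2.1‖ < ε → ‖x.2.2‖ < ε →
      ∀ v : ℂ × ℂ × ℂ,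
        0 ≤ leviForm3 (fun y => apFun p y.1 y.2.1 + ap0Fun p y.1 y.2.2) x v := by
  refine ⟨1, le_rfl, Real.exp (-Real.exp 3), Real.exp_pos _, ?_⟩
  rintro ⟨z, w, v₀⟩ hz0 hz1 hw0 hw1 hv1 ⟨a, b, c⟩
  have hz0' : 0 < ‖z‖ := hz0
  have hz1' : ‖z‖ < Real.exp (-Real.exp 3) := hz1
  have hw0' : 0 < ‖w‖ := hw0
  have hw1' : ‖w‖ < Real.exp (-Real.exp 3) := hw1
  have hv1' : ‖v₀‖ < Real.exp (-Real.exp 3) := hv1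
  have hsq : ∀ u : ℂ, Complex.normSq u = ‖u‖ ^ 2 := fun u => by
    rw [Complex.sq_norm]
  have hεsq : (Real.exp (-Real.exp 3)) ^ 2 = Real.exp (-(2 * Real.exp 3)) := by
    rw [sq, ← Real.exp_add]; congr 1; ring
  have hε2lt1 : Real.exp (-(2 * Real.exp 3)) < 1 := by
    rw [Real.exp_lt_one_iff]
    nlinarith [Real.exp_pos 3]
  -- bounds for z
  have hA₁pos : 0 < Complex.normSq z := by rw [hsq]; positivity
  have hA₁lt : Complex.normSq z < Real.exp (-(2 * Real.exp 3)) := by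
    rw [hsq, ← hεsq]
    nlinarith [hz0'.le, hz1']
  have hA₁lt1 : Complex.normSq z < 1 := lt_trans hA₁lt hε2lt1
  have hg₁ : Real.log (Complex.normSq z) < 0 := Real.log_neg hA₁pos hA₁lt1
  have hM₁ : 3 ≤ Real.log (-Real.log (Complex.normSq z)) := by
    have h1 : Real.log (Complex.normSq z) < -(2 * Real.exp 3) := by
      have := Real.log_lt_log hA₁pos hA₁lt
      rwa [Real.log_exp] at this
    have h2 : Real.exp 3 < -Real.log (Complex.normSq z) := by
      nlinarith [Real.exp_pos 3]
    have h3 := Real.log_lt_log (Real.exp_pos 3) h2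
    rw [Real.log_exp] at h3
    linarith
  -- bounds for w
  have hA₂pos : 0 < Complex.normSq w := by rw [hsq]; positivity
  have hA₂lt : Complex.normSq w < Real.exp (-(2 * Real.exp 3)) := by
    rw [hsq, ← hεsq]
    nlinarith [hw0'.le, hw1']
  have hA₂lt1 : Complex.normSq w < 1 := lt_trans hA₂lt hε2lt1
  have hg₂ : Real.log (Complex.normSq w) < 0 := Real.log_neg hA₂pos hA₂lt1
  have hM₂ : 3 ≤ Real.log (-Real.log (Complex.normSq w)) := by
    have h1 : Real.log (Complex.normSq w) < -(2 * Real.exp 3) := by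
      have := Real.log_lt_log hA₂pos hA₂lt
      rwa [Real.log_exp] at this
    have h2 : Real.exp 3 < -Real.log (Complex.normSq w) := by
      nlinarith [Real.exp_pos 3]
    have h3 := Real.log_lt_log (Real.exp_pos 3) h2
    rw [Real.log_exp] at h3
    linarith
  -- bound for v₀
  have hA₃le1 : Complex.normSq v₀ ≤ 1 := by
    rw [hsq]
    nlinarith [norm_nonneg v₀, hv1', hεsq, hε2lt1, Real.exp_pos (-(2 * Real.exp 3))]
  have hmem : ((z, w, v₀) : ℂ × ℂ × ℂ) ∈ Sdom := ⟨⟨hA₁pos, hA₁lt1⟩, hA₂pos, hA₂lt1⟩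
  -- rewrite the Levi form
  unfold leviForm3
  rw [iteratedFDeriv_two_apply, iteratedFDeriv_two_apply]
  simp only [Matrix.cons_val_zero, Matrix.cons_val_one, Matrix.head_cons]
  have heqF : (fun y : ℂ × ℂ × ℂ => apFun 1 y.1 y.2.1 + ap0Fun 1 y.1 y.2.2)
      =ᶠ[𝓝 ((z, w, v₀) : ℂ × ℂ × ℂ)] fClean := by
    refine Filter.eventuallyEq_of_mem (Sdom_open.mem_nhds hmem) ?_
    intro y hy
    obtain ⟨⟨k10, k11⟩, k20, k21⟩ := hy
    simp only [apFun, ap0Fun, fClean, pow_one]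
    rw [← hsq y.1, ← hsq y.2.1, ← hsq y.2.2]
    rw [abs_of_neg (Real.log_neg k10 k11), abs_of_neg (Real.log_neg k20 k21)]
    ring
  rw [heqF.fderiv.fderiv_eq]
  have hsmul : (Complex.I • ((a, b, c) : ℂ × ℂ × ℂ))
      = ((Complex.I * a, Complex.I * b, Complex.I * c) : ℂ × ℂ × ℂ) := rfl
  rw [hsmul]
  rw [piece z w v₀ a b c hA₁pos hA₁lt1 hA₂pos hA₂lt1,
      piece z w v₀ (Complex.I * a) (Complex.I * b) (Complex.I * c) hA₁pos hA₁lt1 hA₂pos hA₂lt1]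
  rw [normSq_I_mul a, normSq_I_mul b, normSq_I_mul c, re_mul_I z a, re_mul_I w b, re_mul_I v₀ c]
  unfold dval
  exact key_alg (Complex.normSq z) (Complex.normSq a) (Complex.normSq w) (Complex.normSq b)
    (Complex.normSq v₀) (Complex.normSq c)
    ((z * (starRingEnd ℂ) a).re) ((z * (starRingEnd ℂ) a).im)
    ((w * (starRingEnd ℂ) b).re) ((w * (starRingEnd ℂ) b).im)
    ((v₀ * (starRingEnd ℂ) c).re) ((v₀ * (starRingEnd ℂ) c).im)
    (Real.log (Complex.normSq z)) (Real.log (Complex.normSq w))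
    (Real.log (-Real.log (Complex.normSq z))) (Real.log (-Real.log (Complex.normSq w)))
    hA₁pos hA₂pos (Complex.normSq_nonneg a) (Complex.normSq_nonneg b) (Complex.normSq_nonneg c)
    (Complex.normSq_nonneg v₀) hA₃le1 hg₁ hg₂ hM₁ hM₂
    (re_sq_add_im_sq z a) (re_sq_add_im_sq w b) (re_sq_add_im_sq v₀ c)
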